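/- Let a, b be positive integers with a dividing b. Then the group G_{a,b} = {(λ, μ) ∈ U(1) × U(1) : λ^a·μ^(3b) = 1} is isomorphic, as a group, to ℤ_a × U(1). (Indeed, the sequence 1 → U(1) → G_{a,b} → ℤ_a → 1 with maps λ ↦ (λ^(3b/a), λ⁻¹) and (λ, μ) ↦ λ·μ^(3b/a) is split exact.) -/

import Mathlib

/-- The subgroup `G_{a,b} = {(λ, μ) ∈ U(1) × U(1) : λ^a · μ^(3b) = 1}`. -/
noncomputable def Gab (a b : ℕ) : Subgroup (Circle × Circle) where
  carrier := {p | p.1 ^ a * p.2 ^ (3 * b) = 1}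
  one_mem' := by simp
  mul_mem' := by
    intro p q hp hq
    simp only [Set.mem_setOf_eq, Prod.fst_mul, Prod.snd_mul, mul_pow] at *
    rw [mul_mul_mul_comm, hp, hq, one_mul]
  inv_mem' := by
    intro p hp
    simp only [Set.mem_setOf_eq, Prod.fst_inv, Prod.snd_inv, inv_pow] at *
    rw [← mul_inv, hp, inv_one]

/-- The subgroup of `a`-torsion points on the circle. -/
noncomputable def circleTorsion (a : ℕ) : Subgroup Circle where
  carrier := {z | z ^ a = 1}
  one_mem' := by simp
  mul_mem' := by
    intro p q hp hq
    simp only [Set.mem_setOf_eq, mul_pow] at *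
    rw [hp, hq, one_mul]
  inv_mem' := by
    intro p hp
    simp only [Set.mem_setOf_eq, inv_pow] at *
    rw [hp, inv_one]

lemma mem_circleTorsion {a : ℕ} {z : Circle} : z ∈ circleTorsion a ↔ z ^ a = 1 :=
  Iff.rfl

/-- Torsion points of the circle are the roots of unity in `ℂ`. -/
noncomputable def circleTorsionEquivRootsOfUnity (a : ℕ) (ha : 0 < a) :
    circleTorsion a ≃* rootsOfUnity a ℂ where
  toFun z := ⟨Circle.toUnits z.1, by
    rw [mem_rootsOfUnity, ← map_pow]
    have : (z.1 : Circle) ^ a = 1 := z.2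
    rw [this, map_one]⟩
  invFun u := by
    have hu : (u.1 : ℂˣ) ^ a = 1 := (mem_rootsOfUnity a u.1).mp u.2
    have h : ((u.1 : ℂˣ) : ℂ) ^ a = 1 := by
      rw [← Units.val_pow_eq_pow_val, hu, Units.val_one]
    exact ⟨⟨((u.1 : ℂˣ) : ℂ), by
      show ((u.1 : ℂˣ) : ℂ) ∈ Metric.sphere (0 : ℂ) 1
      rw [mem_sphere_zero_iff_norm]
      exact Complex.norm_eq_one_of_pow_eq_one h ha.ne'⟩,
    by
      apply mem_circleTorsion.mpr
      ext
      push_cast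
      exact h⟩
  left_inv z := by ext; rfl
  right_inv u := by ext; rfl
  map_mul' z w := by ext; simp

/-- Roots of unity in `ℂ` form a cyclic group isomorphic to `ZMod a`. -/
noncomputable def rootsOfUnityEquivZMod (a : ℕ) (ha : 0 < a) :
    rootsOfUnity a ℂ ≃* Multiplicative (ZMod a) := by
  haveI : NeZero a := ⟨ha.ne'⟩
  have hζ := Complex.isPrimitiveRoot_exp a ha.ne'
  have hζu := hζ.isUnit_unit' ha.ne'
  exact (MulEquiv.subgroupCongr hζu.zpowers_eq.symm).trans
    (AddEquiv.toMultiplicativeRight hζu.zmodEquivZPowers.symm)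

/-- **`G_{a,b}` is isomorphic to `ℤ_a × U(1)`.**
For positive integers `a ∣ b`, the group
`G_{a,b} = {(λ, μ) ∈ U(1) × U(1) : λ^a μ^(3b) = 1}` is isomorphic, as a group,
to `ℤ_a × U(1)`. -/
theorem Gab_mulEquiv_zmod_prod_circle (a b : ℕ) (ha : 0 < a) (hb : 0 < b)
    (hab : a ∣ b) :
    Nonempty (Gab a b ≃* Multiplicative (ZMod a) × Circle) := by
  set c : ℕ := 3 * b / a with hc
  have hac : c * a = 3 * b := Nat.div_mul_cancel (hab.mul_left 3)
  have key : ∀ (lam mu : Circle), (lam, mu) ∈ Gab a b ↔ (lam * mu ^ c) ^ a = 1 := by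
    intro lam mu
    have : (lam * mu ^ c) ^ a = lam ^ a * mu ^ (3 * b) := by
      rw [mul_pow, ← pow_mul, hac]
    rw [this]
    rfl
  have e1 : Gab a b ≃* circleTorsion a × Circle :=
    { toFun := fun p => (⟨p.1.1 * p.1.2 ^ c, by
        rw [mem_circleTorsion]
        exact (key p.1.1 p.1.2).mp (by simpa using p.2)⟩, p.1.2)
      invFun := fun q => ⟨(q.1.1 * (q.2 ^ c)⁻¹, q.2), by
        have hq : (q.1.1 : Circle) ^ a = 1 := q.1.2
        refine (key _ _).mpr ?_
        rw [inv_mul_cancel_right, hq]⟩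
      left_inv := fun p => by
        ext
        · simp [mul_inv_cancel_right]
        · rfl
      right_inv := fun q => by
        ext
        · simp [inv_mul_cancel_right]
        · rfl
      map_mul' := fun p q => by
        ext
        · push_cast
          simp only [Prod.fst_mul, Prod.snd_mul, mul_pow]
          simp only [Subgroup.coe_mul, Circle.coe_mul, Circle.coe_pow]
          ring
        · rfl }
  exact ⟨e1.trans
    (MulEquiv.prodCongr ((circleTorsionEquivRootsOfUnity a ha).trans
      (rootsOfUnityEquivZMod a ha)) (MulEquiv.refl Circle))⟩
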